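/- A matrix pencil (E,A) with E,A ∈ F^{n×n} is regular (i.e., there exists λ ∈ F with det(λE − A) ≠ 0) if and only if there exist invertible matrices S,T ∈ F^{n×n} such that S E T = [[I,0],[0,N]] and S A T = [[J,0],[0,I]] in block form, where N is nilpotent. -/

import Mathlib

open Matrix Module Filter

section Helpers

variable {F : Type*} [Field F] {n : ℕ} {ι : Type*} [Fintype ι] [DecidableEq ι]

lemma qw_sub_helper (P : Matrix ι (Fin n) F) (Q : Matrix (Fin n) ι F)
    (X : Matrix (Fin n) (Fin n) F) (e : Fin n ≃ ι) :
    ((P.submatrix e id) * X * (Q.submatrix id e)).submatrix e.symm e.symm = P * X * Q := by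
  ext i j
  simp [Matrix.mul_apply, Matrix.submatrix_apply]

lemma qw_mul_helper (P : Matrix ι (Fin n) F) (Q : Matrix (Fin n) ι F) (e : Fin n ≃ ι) :
    (P.submatrix e id) * (Q.submatrix id e) = (P * Q).submatrix e e := by
  ext i j
  simp [Matrix.mul_apply]

lemma qw_mul_helper2 (P : Matrix (Fin n) ι F) (Q : Matrix ι (Fin n) F) (e : Fin n ≃ ι) :
    (P.submatrix id e) * (Q.submatrix e id) = P * Q := by
  ext i j
  simp only [Matrix.mul_apply, Matrix.submatrix_apply, id_eq]
  exact Fintype.sum_equiv e _ _ (fun k => rfl)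

lemma qw_toMatrix_map_conj {W V : Type*} [AddCommGroup W] [Module F W]
    [AddCommGroup V] [Module F V] (b : Basis ι F W) (eqv : W ≃ₗ[F] V) (f : V →ₗ[F] V) :
    LinearMap.toMatrix (b.map eqv) (b.map eqv) f =
      LinearMap.toMatrix b b ((eqv.symm.toLinearMap ∘ₗ f) ∘ₗ eqv.toLinearMap) := by
  ext i j
  simp [LinearMap.toMatrix_apply, Basis.map_apply]

end Helpers

set_option maxHeartbeats 1000000 in
/-- Quasi-Weierstraß form: a matrix pencil `(E, A)` is regular iff there exist
invertible `S, T` bringing it to the block form `SET = diag(I, N)`, `SAT = diag(J, I)`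
with `N` nilpotent. -/
theorem quasi_weierstrass_form {F : Type*} [RCLike F] {n : ℕ}
    (E A : Matrix (Fin n) (Fin n) F) :
    (∃ lam : F, (lam • E - A).det ≠ 0) ↔
    ∃ (nd na : ℕ) (e : Fin n ≃ Fin nd ⊕ Fin na)
      (S T : Matrix (Fin n) (Fin n) F)
      (N : Matrix (Fin na) (Fin na) F) (J : Matrix (Fin nd) (Fin nd) F),
      IsUnit S.det ∧ IsUnit T.det ∧ IsNilpotent N ∧
      (S * E * T).submatrix e.symm e.symm = Matrix.fromBlocks 1 0 0 N ∧
      (S * A * T).submatrix e.symm e.symm = Matrix.fromBlocks J 0 0 1 := by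
  constructor
  · rintro ⟨lam, hlam⟩
    -- the resolvent
    set P : Matrix (Fin n) (Fin n) F := lam • E - A with hP
    have hPunit : IsUnit P.det := hlam.isUnit
    set Mi : Matrix (Fin n) (Fin n) F := P⁻¹ with hMi
    have hMiP : Mi * P = 1 := Matrix.nonsing_inv_mul P hPunit
    set Et : Matrix (Fin n) (Fin n) F := Mi * E with hEt
    have hMiA : Mi * A = lam • Et - 1 := by
      have : Mi * A = Mi * (lam • E) - Mi * P := by rw [hP, Matrix.mul_sub]; exact (sub_sub_cancel _ _).symm
      rw [this, hMiP, Matrix.mul_smul, ← hEt]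
    -- the endomorphism
    set b0 : Basis (Fin n) F (Fin n → F) := Pi.basisFun F (Fin n) with hb0
    set f : Module.End F (Fin n → F) := Matrix.toLin b0 b0 Et with hf
    have hfEt : LinearMap.toMatrix b0 b0 f = Et := LinearMap.toMatrix_toLin b0 b0 Et
    -- Fitting decomposition
    obtain ⟨k, hcompl, hk1⟩ :=
      (f.eventually_isCompl_ker_pow_range_pow.and (eventually_ge_atTop 1)).exists
    set K := LinearMap.ker (f ^ k) with hK
    set R := LinearMap.range (f ^ k) with hR
    have hmapR : ∀ x ∈ R, f x ∈ R := by
      rintro x ⟨y, rfl⟩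
      exact ⟨f y, by rw [← Module.End.mul_apply, ← Module.End.mul_apply, (Commute.pow_self f k).eq]⟩
    have hmapK : ∀ x ∈ K, f x ∈ K := by
      intro x hx
      have : (f ^ k) (f x) = f ((f ^ k) x) := by
        rw [← Module.End.mul_apply, ← Module.End.mul_apply, (Commute.pow_self f k).eq]
      simp only [hK, LinearMap.mem_ker] at hx ⊢
      rw [this, hx, map_zero]
    set fR : R →ₗ[F] R := f.restrict hmapR with hfR
    set fK : K →ₗ[F] K := f.restrict hmapK with hfK
    -- fK is nilpotent
    have hfKnil : fK ^ k = 0 := by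
      rw [hfK, Module.End.pow_restrict]
      ext x
      simpa using x.2
    -- fR is bijective
    have hinj : Function.Injective fR := by
      rw [← LinearMap.ker_eq_bot]
      rw [Submodule.eq_bot_iff]
      rintro ⟨x, hx⟩ hker
      have hfx : f x = 0 := congrArg Subtype.val hker
      have hxK : x ∈ K := by
        obtain ⟨m, rfl⟩ := Nat.exists_eq_add_of_le hk1
        simp only [hK, LinearMap.mem_ker]
        rw [add_comm 1 m, pow_succ, Module.End.mul_apply, hfx, map_zero]
      have : x = 0 := (Submodule.disjoint_def.mp hcompl.disjoint) x hxK hx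
      simp [this]
    have hbij : Function.Bijective fR :=
      ⟨hinj, (LinearMap.injective_iff_surjective).mp hinj⟩
    set gR := LinearEquiv.ofBijective fR hbij with hgR
    -- bases
    set nd := finrank F R with hnd
    set na := finrank F K with hna
    set bR : Basis (Fin nd) F R := Module.finBasis F R with hbR
    set bK : Basis (Fin na) F K := Module.finBasis F K with hbK
    set eqv : (R × K) ≃ₗ[F] (Fin n → F) := Submodule.prodEquivOfIsCompl R K hcompl.symm with heqv
    set b' : Basis (Fin nd ⊕ Fin na) F (Fin n → F) := (bR.prod bK).map eqv with hb'
    set C : Matrix (Fin nd) (Fin nd) F := LinearMap.toMatrix bR bR fR with hC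
    set D : Matrix (Fin na) (Fin na) F := LinearMap.toMatrix bK bK fK with hD
    -- block diagonal form
    have hconj : (eqv.symm.toLinearMap ∘ₗ (f : (Fin n → F) →ₗ[F] (Fin n → F))) ∘ₗ eqv.toLinearMap
        = fR.prodMap fK := by
      apply LinearMap.ext
      rintro ⟨x, y⟩
      simp only [LinearMap.comp_apply, LinearEquiv.coe_coe, LinearMap.prodMap_apply]
      apply eqv.injective
      rw [LinearEquiv.apply_symm_apply]
      have h1 : eqv (x, y) = (x : Fin n → F) + (y : Fin n → F) := rfl
      have h2 : eqv (fR x, fK y) = (fR x : Fin n → F) + (fK y : Fin n → F) := rfl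
      rw [h1, h2, map_add]
      congr 1
    have hblock : LinearMap.toMatrix b' b' (f : (Fin n → F) →ₗ[F] (Fin n → F))
        = Matrix.fromBlocks C 0 0 D := by
      rw [hb', qw_toMatrix_map_conj, hconj, LinearMap.toMatrix_prodMap]
    -- change of basis matrices
    set Tm : Matrix (Fin n) (Fin nd ⊕ Fin na) F := b0.toMatrix b' with hTm
    set Sm : Matrix (Fin nd ⊕ Fin na) (Fin n) F := b'.toMatrix b0 with hSm
    have hTS : Tm * Sm = 1 := Basis.toMatrix_mul_toMatrix_flip b0 b'
    have hST : Sm * Tm = 1 := Basis.toMatrix_mul_toMatrix_flip b' b0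
    have hSEtT : Sm * Et * Tm = Matrix.fromBlocks C 0 0 D := by
      rw [← hfEt, hSm, hTm,
        basis_toMatrix_mul_linearMap_toMatrix_mul_basis_toMatrix, hblock]
    -- invertibility of C
    set Ci : Matrix (Fin nd) (Fin nd) F :=
      LinearMap.toMatrix bR bR (gR.symm : R →ₗ[F] R) with hCi
    have hCiC : Ci * C = 1 := by
      rw [hCi, hC, ← LinearMap.toMatrix_comp bR bR bR]
      have : (gR.symm : R →ₗ[F] R) ∘ₗ fR = LinearMap.id := by
        apply LinearMap.ext; intro x
        have : fR x = gR x := rfl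
        simp [this]
      rw [this, LinearMap.toMatrix_id]
    -- nilpotency of D
    have hDnil : IsNilpotent D := by
      refine ⟨k, ?_⟩
      have h : LinearMap.toMatrixAlgEquiv bK (fK ^ k)
          = (LinearMap.toMatrixAlgEquiv bK fK) ^ k := map_pow _ _ _
      have h0 : LinearMap.toMatrixAlgEquiv bK fK = D := rfl
      rw [h0, hfKnil, map_zero] at h
      exact h.symm
    -- inverse of lam • D - 1
    have hunit : IsUnit (lam • D - 1) := (hDnil.smul lam).isUnit_sub_one
    obtain ⟨u, hu⟩ := hunit
    set Di : Matrix (Fin na) (Fin na) F := ↑u⁻¹ with hDi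
    have hDiD : Di * (lam • D - 1) = 1 := by
      rw [hDi, ← hu]
      exact u.inv_mul
    have hcommDi : Commute Di D := by
      have h1 : Commute (lam • D - 1) D := by
        apply Commute.sub_left
        · exact (Commute.refl D).smul_left lam
        · exact Commute.one_left D
      rw [← hu] at h1
      exact h1.units_inv_left
    set N : Matrix (Fin na) (Fin na) F := Di * D with hN
    have hNnil : IsNilpotent N := hcommDi.isNilpotent_mul_left hDnil
    set Jm : Matrix (Fin nd) (Fin nd) F := Ci * (lam • C - 1) with hJm
    -- assemble
    set S1 : Matrix (Fin nd ⊕ Fin na) (Fin nd ⊕ Fin na) F := Matrix.fromBlocks Ci 0 0 Di with hS1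
    set Sι : Matrix (Fin nd ⊕ Fin na) (Fin n) F := S1 * (Sm * Mi) with hSι
    have key1 : Sι * E * Tm = Matrix.fromBlocks 1 0 0 N := by
      have : Sι * E * Tm = S1 * (Sm * Et * Tm) := by
        rw [hSι, hEt]; simp only [Matrix.mul_assoc]
      rw [this, hSEtT, hS1, Matrix.fromBlocks_multiply]
      simp [hCiC, hN]
    have hSAT' : Sm * (Mi * A) * Tm = lam • Matrix.fromBlocks C 0 0 D - 1 := by
      rw [hMiA, Matrix.mul_sub, Matrix.mul_one, Matrix.sub_mul, hST,
        Matrix.mul_smul, Matrix.smul_mul, hSEtT]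
    have key2 : Sι * A * Tm = Matrix.fromBlocks Jm 0 0 1 := by
      have h1 : Sι * A * Tm = S1 * (Sm * (Mi * A) * Tm) := by
        rw [hSι]; simp only [Matrix.mul_assoc]
      rw [h1, hSAT', hS1]
      have h2 : lam • Matrix.fromBlocks C 0 0 D - (1 : Matrix (Fin nd ⊕ Fin na) (Fin nd ⊕ Fin na) F)
          = Matrix.fromBlocks (lam • C - 1) 0 0 (lam • D - 1) := by
        rw [← Matrix.fromBlocks_one, Matrix.fromBlocks_smul, sub_eq_add_neg,
          Matrix.fromBlocks_neg, Matrix.fromBlocks_add]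
        simp [sub_eq_add_neg]
      rw [h2, Matrix.fromBlocks_multiply]
      simp [hJm, hDiD]
    set e : Fin n ≃ (Fin nd ⊕ Fin na) := b0.indexEquiv b' with he
    refine ⟨nd, na, e, Sι.submatrix e id, Tm.submatrix id e, N, Jm, ?_, ?_, hNnil, ?_, ?_⟩
    · -- IsUnit S.det
      set Xι : Matrix (Fin n) (Fin nd ⊕ Fin na) F :=
        P * Tm * Matrix.fromBlocks C 0 0 (lam • D - 1) with hXι
      have hSX : Sι * Xι = 1 := by
        have h1 : Sι * Xι = S1 * (Sm * ((Mi * P) * (Tm * Matrix.fromBlocks C 0 0 (lam • D - 1)))) := by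
          rw [hSι, hXι]; simp only [Matrix.mul_assoc]
        rw [h1, hMiP, Matrix.one_mul, ← Matrix.mul_assoc Sm Tm _, hST, Matrix.one_mul, hS1,
          Matrix.fromBlocks_multiply]
        simp [hCiC, hDiD, Matrix.fromBlocks_one]
      have : (Sι.submatrix e id) * (Xι.submatrix id e) = 1 := by
        rw [qw_mul_helper _ _ e, hSX]
        ext i j
        simp [Matrix.one_apply, e.injective.eq_iff]
      exact IsUnit.of_mul_eq_one _ (by
        rw [← Matrix.det_mul, this, Matrix.det_one])
    · -- IsUnit T.det
      have : (Tm.submatrix id e) * (Sm.submatrix e id) = 1 := by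
        rw [qw_mul_helper2, hTS]
      exact IsUnit.of_mul_eq_one _ (by
        rw [← Matrix.det_mul, this, Matrix.det_one])
    · rw [qw_sub_helper, key1]
    · rw [qw_sub_helper, key2]
  · rintro ⟨nd, na, e, S, T, N, J, hS, hT, hN, hE, hA⟩
    -- choose lam avoiding the roots of the characteristic polynomial of J
    have hmon := J.charpoly_monic
    have hne : J.charpoly ≠ 0 := hmon.ne_zero
    obtain ⟨lam, hlam⟩ := Infinite.exists_notMem_finset J.charpoly.roots.toFinset
    refine ⟨lam, ?_⟩
    have heval : Polynomial.eval lam J.charpoly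
        = (lam • (1 : Matrix (Fin nd) (Fin nd) F) - J).det := by
      rw [Matrix.charpoly, eval_det, matPolyEquiv_charmatrix]
      simp [smul_one_eq_diagonal]
    have hJdet : (lam • (1 : Matrix (Fin nd) (Fin nd) F) - J).det ≠ 0 := by
      rw [← heval]
      intro h0
      exact hlam (Multiset.mem_toFinset.mpr ((Polynomial.mem_roots hne).mpr h0))
    have hNdet : (lam • N - (1 : Matrix (Fin na) (Fin na) F)).det ≠ 0 := by
      have : IsUnit (lam • N - 1) := (hN.smul lam).isUnit_sub_one
      exact ((Matrix.isUnit_iff_isUnit_det _).mp this).ne_zero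
    have hblocks : (S * (lam • E - A) * T).submatrix e.symm e.symm
        = Matrix.fromBlocks (lam • 1 - J) 0 0 (lam • N - 1) := by
      have h1 : S * (lam • E - A) * T = lam • (S * E * T) - S * A * T := by
        rw [Matrix.mul_sub, Matrix.sub_mul, Matrix.mul_smul, Matrix.smul_mul]
      have h2 : (lam • (S * E * T) - S * A * T).submatrix e.symm e.symm
          = lam • ((S * E * T).submatrix e.symm e.symm)
            - (S * A * T).submatrix e.symm e.symm := rfl
      rw [h1, h2, hE, hA, Matrix.fromBlocks_smul, sub_eq_add_neg,
        Matrix.fromBlocks_neg, Matrix.fromBlocks_add]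
      simp [sub_eq_add_neg]
    have hdet : (S * (lam • E - A) * T).det ≠ 0 := by
      rw [← Matrix.det_submatrix_equiv_self e.symm, hblocks,
        Matrix.det_fromBlocks_zero₂₁]
      exact mul_ne_zero hJdet hNdet
    intro h0
    apply hdet
    rw [Matrix.det_mul, Matrix.det_mul, h0, mul_zero, zero_mul]
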